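/- Let δ ∈ (0,1), set η = 1 + √(8 log(1/δ)), let ε > 0, and suppose the number of samples satisfies c ≥ η²/ε². Let t_1,…,t_c be c i.i.d. random indices in {1,…,n}, each distributed according to P, and let H̃_km = (1/c) Σ_{j=1}^c X_{t_j}. Then with probability at least 1 − δ, |H_km − H̃_km| ≤ ε ||v_k|| ||v_m||. -/

import Mathlib

open Finset



/-- Factorization of marginals of a product weight over `Fin c → Fin n`. -/
lemma fmc_prodmarg {n c : ℕ} (P : Fin n → ℝ) (hP1 : ∑ i, P i = 1)
    (s : Finset (Fin c)) (F : Fin c → Fin n → ℝ) :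
    ∑ t : Fin c → Fin n, (∏ j, P (t j)) * ∏ j ∈ s, F j (t j)
      = ∏ j ∈ s, ∑ i, P i * F j i := by
  have h1 : ∀ t : Fin c → Fin n, (∏ j, P (t j)) * ∏ j ∈ s, F j (t j)
      = ∏ j : Fin c, (P (t j) * if j ∈ s then F j (t j) else 1) := by
    intro t
    rw [Finset.prod_mul_distrib]
    congr 1
    rw [Fintype.prod_ite_mem]
  simp_rw [h1]
  rw [← Fintype.prod_sum (fun (j : Fin c) (i : Fin n) => P i * if j ∈ s then F j i else 1)]
  have h2 : ∀ j : Fin c, (∑ i, P i * if j ∈ s then F j i else 1)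
      = if j ∈ s then ∑ i, P i * F j i else 1 := by
    intro j; by_cases hj : j ∈ s <;> simp [hj, hP1]
  simp_rw [h2]
  rw [Fintype.prod_ite_mem]

/-- One-sided Chernoff bound for a mean-zero bounded variable under the product weight. -/
lemma fmc_chernoff {n c : ℕ} (P : Fin n → ℝ) (hPnn : ∀ i, 0 ≤ P i) (hP1 : ∑ i, P i = 1)
    (Z : Fin n → ℝ) (b : ℝ) (hb : 0 < b) (hZb : ∀ i, |Z i| ≤ b)
    (hEZ : ∑ i, P i * Z i = 0) (lam r : ℝ) (hlam : 0 ≤ lam) :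
    ∑ t ∈ Finset.univ.filter (fun t : Fin c → Fin n => r ≤ ∑ j, Z (t j)), ∏ j, P (t j)
      ≤ Real.exp ((c : ℝ) * (lam * b) ^ 2 / 2 - lam * r) := by
  set M := ∑ i, P i * Real.exp (lam * Z i) with hM
  have hM0 : 0 ≤ M := Finset.sum_nonneg fun i _ => mul_nonneg (hPnn i) (Real.exp_pos _).le
  have hMle : M ≤ Real.exp ((lam * b) ^ 2 / 2) := by
    have h1 : M ≤ Real.cosh (lam * b) := by
      have hstep : ∀ i ∈ (Finset.univ : Finset (Fin n)),
          P i * Real.exp (lam * Z i)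
            ≤ P i * (Real.cosh (lam * b) + (Z i / b) * Real.sinh (lam * b)) := by
        intro i _
        apply mul_le_mul_of_nonneg_left _ (hPnn i)
        have habs : |Z i / b| ≤ 1 := by
          rw [abs_div, abs_of_pos hb, div_le_one hb]; exact hZb i
        have h := Real.exp_mul_le_cosh_add_mul_sinh habs (lam * b)
        have harg : Z i / b * (lam * b) = lam * Z i := by field_simp
        rwa [harg] at h
      calc M ≤ ∑ i, P i * (Real.cosh (lam * b) + (Z i / b) * Real.sinh (lam * b)) :=
            Finset.sum_le_sum hstep
        _ = Real.cosh (lam * b) := by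
            have e1 : ∀ i : Fin n,
                P i * (Real.cosh (lam * b) + (Z i / b) * Real.sinh (lam * b))
                  = Real.cosh (lam * b) * P i + (Real.sinh (lam * b) / b) * (P i * Z i) := by
              intro i; field_simp
            simp_rw [e1]
            rw [Finset.sum_add_distrib, ← Finset.mul_sum, ← Finset.mul_sum, hP1, hEZ,
              mul_one, mul_zero, add_zero]
    exact h1.trans (Real.cosh_le_exp_half_sq _)
  calc ∑ t ∈ Finset.univ.filter (fun t : Fin c → Fin n => r ≤ ∑ j, Z (t j)), ∏ j, P (t j)
      ≤ ∑ t ∈ Finset.univ.filter (fun t : Fin c → Fin n => r ≤ ∑ j, Z (t j)),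
          (∏ j, P (t j)) * Real.exp (lam * (∑ j, Z (t j)) - lam * r) := by
        apply Finset.sum_le_sum
        intro t ht
        have hr : r ≤ ∑ j, Z (t j) := (Finset.mem_filter.mp ht).2
        have hw : 0 ≤ ∏ j, P (t j) := Finset.prod_nonneg fun j _ => hPnn _
        have h1 : 1 ≤ Real.exp (lam * (∑ j, Z (t j)) - lam * r) := by
          apply Real.one_le_exp
          have : 0 ≤ lam * ((∑ j, Z (t j)) - r) := mul_nonneg hlam (by linarith)
          nlinarith
        exact le_mul_of_one_le_right hw h1
    _ ≤ ∑ t : Fin c → Fin n,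
          (∏ j, P (t j)) * Real.exp (lam * (∑ j, Z (t j)) - lam * r) :=
        Finset.sum_le_sum_of_subset_of_nonneg (Finset.filter_subset _ _)
          (fun t _ _ => mul_nonneg (Finset.prod_nonneg fun j _ => hPnn _) (Real.exp_pos _).le)
    _ = Real.exp (-(lam * r)) *
          ∑ t : Fin c → Fin n, (∏ j, P (t j)) * ∏ j, Real.exp (lam * Z (t j)) := by
        rw [Finset.mul_sum]
        apply Finset.sum_congr rfl
        intro t _
        rw [show lam * (∑ j, Z (t j)) - lam * r = (∑ j, lam * Z (t j)) + -(lam * r) by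
          rw [Finset.mul_sum]; ring]
        rw [Real.exp_add, Real.exp_sum]
        ring
    _ = Real.exp (-(lam * r)) * M ^ c := by
        congr 1
        have h := fmc_prodmarg P hP1 (Finset.univ : Finset (Fin c))
          (fun _ i => Real.exp (lam * Z i))
        rw [h, Finset.prod_const, Finset.card_univ, Fintype.card_fin]
    _ ≤ Real.exp (-(lam * r)) * (Real.exp ((lam * b) ^ 2 / 2)) ^ c := by
        apply mul_le_mul_of_nonneg_left _ (Real.exp_pos _).le
        exact pow_le_pow_left₀ hM0 hMle c
    _ = Real.exp ((c : ℝ) * (lam * b) ^ 2 / 2 - lam * r) := by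
        rw [← Real.exp_nat_mul, ← Real.exp_add]
        congr 1
        ring

lemma fmc_sqrt8_lb : (282 : ℝ) / 100 ≤ Real.sqrt 8 := by
  rw [show ((282 : ℝ) / 100) = Real.sqrt ((282 / 100) ^ 2) from
    (Real.sqrt_sq (by norm_num)).symm]
  exact Real.sqrt_le_sqrt (by norm_num)

lemma fmc_two_le_exp (x : ℝ) (hx : (83 : ℝ) / 100 ≤ x) : 2 ≤ Real.exp x := by
  have hx0 : (0 : ℝ) ≤ x := by linarith
  have ha := Real.add_one_le_exp (x / 3)
  have hb : (1 + x / 3) ^ 3 ≤ Real.exp (x / 3) ^ 3 := by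
    apply pow_le_pow_left₀ (by linarith) (by linarith)
  have hcq : Real.exp (x / 3) ^ 3 = Real.exp x := by
    rw [← Real.exp_nat_mul]; congr 1; push_cast; ring
  rw [← hcq]
  refine le_trans ?_ hb
  have hq : (83 / 100 : ℝ) * (83 / 100) ≤ x * x := mul_le_mul hx hx (by norm_num) hx0
  have hq3 : 0 ≤ x * x * x := mul_nonneg (mul_nonneg hx0 hx0) hx0
  nlinarith [hq, hq3, hx]

lemma fmc_exp_le_eta_sq (L u : ℝ) (hL0 : 0 < L) (hL1 : L ≤ 1) (hu0 : 0 ≤ u)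
    (hu2 : u ^ 2 = 8 * L) : Real.exp L ≤ (1 + u) ^ 2 := by
  have h2 : (0 : ℝ) < 1 - L / 2 := by linarith
  have h1 : 1 - L / 2 ≤ Real.exp (-(L / 2)) := by
    have := Real.add_one_le_exp (-(L / 2)); linarith
  have h3 : Real.exp (L / 2) ≤ 1 / (1 - L / 2) := by
    rw [le_div_iff₀ h2]
    have hm := mul_le_mul_of_nonneg_left h1 (Real.exp_pos (L / 2)).le
    rw [← Real.exp_add] at hm
    simp only [add_neg_cancel, Real.exp_zero] at hm
    linarith
  have hu3 : u ≤ 3 := by nlinarith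
  have h5 : 1 ≤ (1 + u) * (1 - L / 2) := by nlinarith
  have h4 : Real.exp L = Real.exp (L / 2) ^ 2 := by
    rw [sq, ← Real.exp_add]; ring_nf
  have h6 : 1 / (1 - L / 2) ≤ 1 + u := by
    rw [div_le_iff₀ h2]; linarith
  have h7 : Real.exp (L / 2) ≤ 1 + u := h3.trans h6
  rw [h4]
  have := Real.exp_pos (L / 2)
  nlinarith

set_option maxHeartbeats 3200000 in
/-- High-probability bound for the `c`-sample estimator: with `η = 1 + √(8 log(1/δ))` and
`c ≥ η²/ε²` samples, the event `|H_km − H̃_km| ≤ ε ‖v_k‖ ‖v_m‖` has probability at least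
`1 − δ` under the product distribution of `c` i.i.d. samples drawn from `P`. -/
theorem fmc_high_probability_bound_eps
    {n d c : ℕ} (hn : 0 < n) (hd : 0 < d) (hc : 0 < c)
    (δ : ℝ) (hδ0 : 0 < δ) (hδ1 : δ < 1)
    (η : ℝ) (hη : η = 1 + Real.sqrt (8 * Real.log (1 / δ)))
    (ε : ℝ) (hε : 0 < ε) (hcε : η ^ 2 / ε ^ 2 ≤ (c : ℝ))
    (vk vm : Fin n → EuclideanSpace ℝ (Fin d))
    (S : ℝ) (hS : S = ∑ j, ‖vk j‖ * ‖vm j‖) (hSpos : 0 < S)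
    (P : Fin n → ℝ) (hP : ∀ t, P t = ‖vk t‖ * ‖vm t‖ / S)
    (X : Fin n → ℝ)
    (hX : ∀ t, X t = if 0 < P t then (inner ℝ (vk t) (vm t) : ℝ) / P t else 0)
    (Hkm : ℝ) (hH : Hkm = ∑ i, (inner ℝ (vk i) (vm i) : ℝ))
    (est : (Fin c → Fin n) → ℝ)
    (hest : ∀ t, est t = (1 / (c : ℝ)) * ∑ j, X (t j)) :
    1 - δ ≤
      ∑ t ∈ Finset.univ.filter (fun t : Fin c → Fin n =>
          |Hkm - est t| ≤ ε *
            (Real.sqrt (∑ i, ‖vk i‖ ^ 2) * Real.sqrt (∑ i, ‖vm i‖ ^ 2))),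
        ∏ j, P (t j) := by
  classical
  set R : ℝ := Real.sqrt (∑ i, ‖vk i‖ ^ 2) * Real.sqrt (∑ i, ‖vm i‖ ^ 2) with hR
  -- basic facts
  have hPnn : ∀ i, 0 ≤ P i := by
    intro i; rw [hP]; positivity
  have hP1 : ∑ i, P i = 1 := by
    simp_rw [hP]
    rw [← Finset.sum_div, ← hS, div_self hSpos.ne']
  have hSR : S ≤ R := by
    rw [hS, hR]
    exact Real.sum_mul_le_sqrt_mul_sqrt _ _ _
  have hPX : ∀ i, P i * X i = (inner ℝ (vk i) (vm i) : ℝ) := by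
    intro i
    by_cases h : 0 < P i
    · rw [hX, if_pos h]; field_simp
    · have hP0 : P i = 0 := le_antisymm (not_lt.mp h) (hPnn i)
      rw [hX, if_neg h, mul_zero]
      have hvv : ‖vk i‖ * ‖vm i‖ = 0 := by
        rw [hP] at hP0
        exact (div_eq_zero_iff.mp hP0).resolve_right hSpos.ne'
      have h1 : |(inner ℝ (vk i) (vm i) : ℝ)| ≤ 0 := hvv ▸ abs_real_inner_le_norm (vk i) (vm i)
      have := abs_nonneg (inner ℝ (vk i) (vm i) : ℝ)
      symm
      exact abs_eq_zero.mp (le_antisymm h1 this)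
  have hEX : ∑ i, P i * X i = Hkm := by
    simp_rw [hPX]; exact hH.symm
  have hXS : ∀ i, |X i| ≤ S := by
    intro i
    by_cases h : 0 < P i
    · rw [hX, if_pos h, abs_div, abs_of_pos h, div_le_iff₀ h]
      have hSP : S * P i = ‖vk i‖ * ‖vm i‖ := by rw [hP]; field_simp
      calc |(inner ℝ (vk i) (vm i) : ℝ)| ≤ ‖vk i‖ * ‖vm i‖ := abs_real_inner_le_norm _ _
        _ = S * P i := hSP.symm
    · rw [hX, if_neg h]; simpa using hSpos.le
  have hHS : |Hkm| ≤ S := by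
    rw [hH, hS]
    refine (Finset.abs_sum_le_sum_abs _ _).trans (Finset.sum_le_sum fun i _ => ?_)
    exact abs_real_inner_le_norm _ _
  obtain ⟨Y, hYdef⟩ : ∃ Y : Fin n → ℝ, Y = fun i => X i - Hkm := ⟨_, rfl⟩
  have hEY : ∑ i, P i * Y i = 0 := by
    simp only [hYdef, mul_sub]
    rw [Finset.sum_sub_distrib, hEX, ← Finset.sum_mul, hP1, one_mul, sub_self]
  have hYb : ∀ i, |Y i| ≤ 2 * S := by
    intro i
    simp only [hYdef]
    calc |X i - Hkm| ≤ |X i| + |Hkm| := abs_sub (X i) Hkm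
      _ ≤ 2 * S := by linarith [hXS i, hHS]
  -- δ, L, u, η facts
  obtain ⟨L, hLdef⟩ : ∃ L : ℝ, L = Real.log (1 / δ) := ⟨_, rfl⟩
  have hL0 : 0 < L := hLdef ▸ Real.log_pos (one_lt_one_div hδ0 hδ1)
  obtain ⟨u, hudef⟩ : ∃ u : ℝ, u = Real.sqrt (8 * L) := ⟨_, rfl⟩
  have hu0 : 0 ≤ u := hudef ▸ Real.sqrt_nonneg _
  have hu2 : u ^ 2 = 8 * L := by rw [hudef]; exact Real.sq_sqrt (by positivity)
  have hηu : η = 1 + u := by rw [hudef, hLdef]; exact hη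
  have hη1 : (1 : ℝ) ≤ η := by rw [hηu]; linarith
  have hη0 : (0 : ℝ) < η := by linarith
  have hδL : δ = Real.exp (-L) := by
    rw [hLdef, one_div, Real.log_inv, neg_neg, Real.exp_log hδ0]
  -- c, s facts
  have hcpos : (0 : ℝ) < (c : ℝ) := by exact_mod_cast hc
  have hsc : 0 < Real.sqrt c := Real.sqrt_pos.2 hcpos
  have hc' : Real.sqrt c * Real.sqrt c = (c : ℝ) := Real.mul_self_sqrt hcpos.le
  obtain ⟨s, hsdef⟩ : ∃ s : ℝ, s = η * S / Real.sqrt c := ⟨_, rfl⟩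
  have hs0 : 0 < s := by rw [hsdef]; positivity
  have hηc : η ≤ Real.sqrt c * ε := by
    have h1 : η ^ 2 ≤ (c : ℝ) * ε ^ 2 := by
      rw [div_le_iff₀ (by positivity)] at hcε; exact hcε
    have h2 : η = Real.sqrt (η ^ 2) := (Real.sqrt_sq hη0.le).symm
    rw [h2]
    calc Real.sqrt (η ^ 2) ≤ Real.sqrt ((c : ℝ) * ε ^ 2) := Real.sqrt_le_sqrt h1
      _ = Real.sqrt c * ε := by
          rw [Real.sqrt_mul hcpos.le, Real.sqrt_sq hε.le]
  have hsεR : s ≤ ε * R := by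
    rw [hsdef, div_le_iff₀ hsc]
    calc η * S ≤ (Real.sqrt c * ε) * S := mul_le_mul_of_nonneg_right hηc hSpos.le
      _ = ε * S * Real.sqrt c := by ring
      _ ≤ ε * R * Real.sqrt c :=
          mul_le_mul_of_nonneg_right (mul_le_mul_of_nonneg_left hSR hε.le) hsc.le
  -- split good/bad
  have hwsum : ∑ t : Fin c → Fin n, ∏ j, P (t j) = 1 := by
    have h := fmc_prodmarg P hP1 (∅ : Finset (Fin c)) (fun _ _ => (1 : ℝ))
    simpa using h
  have hwnn : ∀ t : Fin c → Fin n, 0 ≤ ∏ j, P (t j) :=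
    fun t => Finset.prod_nonneg fun j _ => hPnn _
  have hsplit := Finset.sum_filter_add_sum_filter_not Finset.univ
    (fun t : Fin c → Fin n => |Hkm - est t| ≤ ε * R) (fun t => ∏ j, P (t j))
  rw [hwsum] at hsplit
  -- suffices: bad mass ≤ δ
  suffices hbad : ∑ t ∈ Finset.univ.filter
      (fun t : Fin c → Fin n => ¬ |Hkm - est t| ≤ ε * R), ∏ j, P (t j) ≤ δ by
    linarith
  -- bad ⊆ {|∑ Y| ≥ c s}
  have hBsub : Finset.univ.filter (fun t : Fin c → Fin n => ¬ |Hkm - est t| ≤ ε * R)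
      ⊆ Finset.univ.filter (fun t : Fin c → Fin n => (c : ℝ) * s ≤ |∑ j, Y (t j)|) := by
    intro t ht
    simp only [Finset.mem_filter, Finset.mem_univ, true_and, not_le] at ht ⊢
    have hEq : ∑ j, Y (t j) = (c : ℝ) * (est t - Hkm) := by
      simp only [hYdef]
      rw [Finset.sum_sub_distrib, Finset.sum_const, Finset.card_univ, Fintype.card_fin,
        hest t, nsmul_eq_mul]
      field_simp
    rw [hEq, abs_mul, abs_of_pos hcpos, abs_sub_comm]
    have h' : s ≤ |Hkm - est t| := le_of_lt (lt_of_le_of_lt hsεR ht)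
    exact mul_le_mul_of_nonneg_left h' hcpos.le
  have hstep1 : ∑ t ∈ Finset.univ.filter
      (fun t : Fin c → Fin n => ¬ |Hkm - est t| ≤ ε * R), ∏ j, P (t j)
      ≤ ∑ t ∈ Finset.univ.filter
        (fun t : Fin c → Fin n => (c : ℝ) * s ≤ |∑ j, Y (t j)|), ∏ j, P (t j) :=
    Finset.sum_le_sum_of_subset_of_nonneg hBsub (fun t _ _ => hwnn t)
  refine hstep1.trans ?_
  -- now the key bound
  by_cases hL1 : L ≤ 1
  · -- Chebyshev case
    obtain ⟨V, hVdef⟩ : ∃ V : ℝ, V = ∑ i, P i * Y i ^ 2 := ⟨_, rfl⟩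
    have key : ∀ j j' : Fin c,
        ∑ t : Fin c → Fin n, (∏ l, P (t l)) * (Y (t j) * Y (t j'))
          = if j = j' then V else 0 := by
      intro j j'
      by_cases h : j = j'
      · subst h
        rw [if_pos rfl]
        have h := fmc_prodmarg P hP1 ({j} : Finset (Fin c)) (fun _ i => Y i ^ 2)
        simp only [Finset.prod_singleton] at h
        rw [hVdef, ← h]
        apply Finset.sum_congr rfl
        intro t _; rw [sq]
      · rw [if_neg h]
        have hp := fmc_prodmarg P hP1 ({j, j'} : Finset (Fin c)) (fun _ i => Y i)
        rw [Finset.prod_pair h] at hp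
        have hp2 : ∀ t : Fin c → Fin n,
            ∏ l ∈ ({j, j'} : Finset (Fin c)), Y (t l) = Y (t j) * Y (t j') := by
          intro t; rw [Finset.prod_pair h]
        simp_rw [hp2] at hp
        rw [hp, hEY, mul_zero]
    have hsum2 : ∑ t : Fin c → Fin n, (∏ l, P (t l)) * (∑ j, Y (t j)) ^ 2
        = (c : ℝ) * V := by
      have e1 : ∀ t : Fin c → Fin n, (∏ l, P (t l)) * (∑ j, Y (t j)) ^ 2
          = ∑ j : Fin c, ∑ j' : Fin c, (∏ l, P (t l)) * (Y (t j) * Y (t j')) := by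
        intro t
        rw [sq, Finset.sum_mul_sum, Finset.mul_sum]
        apply Finset.sum_congr rfl
        intro j _
        rw [Finset.mul_sum]
      simp_rw [e1]
      rw [Finset.sum_comm]
      have e3 : ∀ j : Fin c,
          ∑ t : Fin c → Fin n, ∑ j' : Fin c, (∏ l, P (t l)) * (Y (t j) * Y (t j'))
            = ∑ j' : Fin c, if j = j' then V else 0 := by
        intro j
        rw [Finset.sum_comm]
        exact Finset.sum_congr rfl fun j' _ => key j j'
      rw [Finset.sum_congr rfl fun j _ => e3 j]
      simp only [Finset.sum_ite_eq, Finset.mem_univ, if_true]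
      rw [Finset.sum_const, Finset.card_univ, Fintype.card_fin, nsmul_eq_mul]
    have hVS : V ≤ S ^ 2 := by
      have hVeq : V = (∑ i, P i * X i ^ 2) - Hkm ^ 2 := by
        have e : ∀ i : Fin n, P i * Y i ^ 2
            = P i * X i ^ 2 - 2 * Hkm * (P i * X i) + Hkm ^ 2 * P i := by
          intro i; simp only [hYdef]; ring
        rw [hVdef]
        simp_rw [e]
        rw [Finset.sum_add_distrib, Finset.sum_sub_distrib, ← Finset.mul_sum,
          ← Finset.mul_sum, hEX, hP1]
        ring
      have hEX2 : ∑ i, P i * X i ^ 2 ≤ S ^ 2 := by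
        calc ∑ i, P i * X i ^ 2 ≤ ∑ i, P i * S ^ 2 := by
              apply Finset.sum_le_sum
              intro i _
              apply mul_le_mul_of_nonneg_left _ (hPnn i)
              calc X i ^ 2 = |X i| ^ 2 := (sq_abs _).symm
                _ ≤ S ^ 2 := pow_le_pow_left₀ (abs_nonneg _) (hXS i) 2
          _ = S ^ 2 := by rw [← Finset.sum_mul, hP1, one_mul]
      linarith [hVeq, hEX2, sq_nonneg Hkm]
    have hcs0 : 0 < (c : ℝ) * s := by positivity
    have hcheb : ∑ t ∈ Finset.univ.filter
        (fun t : Fin c → Fin n => (c : ℝ) * s ≤ |∑ j, Y (t j)|), ∏ j, P (t j)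
        ≤ 1 / η ^ 2 := by
      have hstep : ∑ t ∈ Finset.univ.filter
          (fun t : Fin c → Fin n => (c : ℝ) * s ≤ |∑ j, Y (t j)|), ∏ j, P (t j)
          ≤ ∑ t : Fin c → Fin n,
            (∏ l, P (t l)) * ((∑ j, Y (t j)) ^ 2 / ((c : ℝ) * s) ^ 2) := by
        calc ∑ t ∈ (Finset.univ.filter
            (fun t : Fin c → Fin n => (c : ℝ) * s ≤ |∑ j, Y (t j)|)), ∏ j, P (t j)
            ≤ ∑ t ∈ (Finset.univ.filter
              (fun t : Fin c → Fin n => (c : ℝ) * s ≤ |∑ j, Y (t j)|)),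
                (∏ l, P (t l)) * ((∑ j, Y (t j)) ^ 2 / ((c : ℝ) * s) ^ 2) := by
              apply Finset.sum_le_sum
              intro t ht
              have h := (Finset.mem_filter.mp ht).2
              apply le_mul_of_one_le_right (hwnn t)
              rw [le_div_iff₀ (by positivity), one_mul]
              calc ((c : ℝ) * s) ^ 2 ≤ |∑ j, Y (t j)| ^ 2 := pow_le_pow_left₀ hcs0.le h 2
                _ = (∑ j, Y (t j)) ^ 2 := sq_abs _
          _ ≤ ∑ t : Fin c → Fin n,
              (∏ l, P (t l)) * ((∑ j, Y (t j)) ^ 2 / ((c : ℝ) * s) ^ 2) := by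
              apply Finset.sum_le_sum_of_subset_of_nonneg (Finset.filter_subset _ _)
              intro t _ _
              apply mul_nonneg (hwnn t)
              positivity
      have heq : ∑ t : Fin c → Fin n,
          (∏ l, P (t l)) * ((∑ j, Y (t j)) ^ 2 / ((c : ℝ) * s) ^ 2)
          = (1 / ((c : ℝ) * s) ^ 2) * ((c : ℝ) * V) := by
        rw [← hsum2, Finset.mul_sum]
        apply Finset.sum_congr rfl
        intro t _
        ring
      rw [heq] at hstep
      refine hstep.trans ?_
      have hs2 : s ^ 2 = η ^ 2 * S ^ 2 / (c : ℝ) := by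
        rw [hsdef, div_pow, mul_pow, Real.sq_sqrt hcpos.le]
      have e2 : (1 / ((c : ℝ) * s) ^ 2) * ((c : ℝ) * V) = V / ((c : ℝ) * s ^ 2) := by
        field_simp
      rw [e2, hs2]
      have e3 : (c : ℝ) * (η ^ 2 * S ^ 2 / (c : ℝ)) = η ^ 2 * S ^ 2 := by
        field_simp
      rw [e3]
      calc V / (η ^ 2 * S ^ 2) ≤ S ^ 2 / (η ^ 2 * S ^ 2) :=
            (div_le_div_iff_of_pos_right (by positivity)).mpr hVS
        _ = 1 / η ^ 2 := by
            rw [div_eq_div_iff (by positivity) (by positivity)]; ring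
    refine hcheb.trans ?_
    -- 1/η² ≤ δ
    have hexpL : Real.exp L ≤ η ^ 2 := by
      rw [hηu]; exact fmc_exp_le_eta_sq L u hL0 hL1 hu0 hu2
    rw [div_le_iff₀ (by positivity), hδL]
    have hee : Real.exp (-L) * Real.exp L = 1 := by
      rw [← Real.exp_add]; simp
    calc (1 : ℝ) = Real.exp (-L) * Real.exp L := hee.symm
      _ ≤ Real.exp (-L) * η ^ 2 := by
          apply mul_le_mul_of_nonneg_left hexpL (Real.exp_pos _).le
  · -- Chernoff case
    push_neg at hL1
    obtain ⟨lam, hlamdef⟩ : ∃ lam : ℝ, lam = η / (4 * S * Real.sqrt c) := ⟨_, rfl⟩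
    have hlam0 : 0 ≤ lam := by rw [hlamdef]; positivity
    have hbS : 0 < 2 * S := by linarith
    have hEnY : ∑ i, P i * (-Y i) = 0 := by
      simp only [mul_neg]
      rw [Finset.sum_neg_distrib, hEY, neg_zero]
    have hnYb : ∀ i, |(-Y i)| ≤ 2 * S := fun i => (abs_neg (Y i)) ▸ hYb i
    have hCp := fmc_chernoff (c := c) P hPnn hP1 Y (2 * S) hbS hYb hEY lam ((c : ℝ) * s) hlam0
    have hCm := fmc_chernoff (c := c) P hPnn hP1 (fun i => -Y i) (2 * S) hbS hnYb hEnY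
      lam ((c : ℝ) * s) hlam0
    -- exponent arithmetic
    have h4c : Real.sqrt (c : ℝ) ^ 4 = (c : ℝ) ^ 2 := by
      rw [show (4 : ℕ) = 2 * 2 from rfl, pow_mul, Real.sq_sqrt hcpos.le]
    have hexp_eq : (c : ℝ) * (lam * (2 * S)) ^ 2 / 2 - lam * ((c : ℝ) * s) = -(η ^ 2 / 8) := by
      rw [hlamdef, hsdef]
      field_simp
      ring_nf
      simp only [h4c, Real.sq_sqrt hcpos.le]
    rw [hexp_eq] at hCp hCm
    -- union bound
    have hsub : Finset.univ.filter (fun t : Fin c → Fin n => (c : ℝ) * s ≤ |∑ j, Y (t j)|)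
        ⊆ Finset.univ.filter (fun t : Fin c → Fin n => (c : ℝ) * s ≤ ∑ j, Y (t j))
          ∪ Finset.univ.filter (fun t : Fin c → Fin n => (c : ℝ) * s ≤ ∑ j, (fun i => -Y i) (t j)) := by
      intro t ht
      simp only [Finset.mem_filter, Finset.mem_univ, true_and, Finset.mem_union] at ht ⊢
      rcases le_abs.mp ht with h | h
      · exact Or.inl h
      · right
        rw [Finset.sum_neg_distrib]
        exact h
    have hub : ∑ t ∈ Finset.univ.filter
        (fun t : Fin c → Fin n => (c : ℝ) * s ≤ |∑ j, Y (t j)|), ∏ j, P (t j)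
        ≤ Real.exp (-(η ^ 2 / 8)) + Real.exp (-(η ^ 2 / 8)) := by
      have h1 : ∑ t ∈ Finset.univ.filter
          (fun t : Fin c → Fin n => (c : ℝ) * s ≤ |∑ j, Y (t j)|), ∏ j, P (t j)
          ≤ ∑ t ∈ (Finset.univ.filter (fun t : Fin c → Fin n => (c : ℝ) * s ≤ ∑ j, Y (t j))
            ∪ Finset.univ.filter (fun t : Fin c → Fin n =>
              (c : ℝ) * s ≤ ∑ j, (fun i => -Y i) (t j))), ∏ j, P (t j) :=
        Finset.sum_le_sum_of_subset_of_nonneg hsub (fun t _ _ => hwnn t)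
      have h2 : (∑ t ∈ (Finset.univ.filter (fun t : Fin c → Fin n => (c : ℝ) * s ≤ ∑ j, Y (t j))
            ∪ Finset.univ.filter (fun t : Fin c → Fin n =>
              (c : ℝ) * s ≤ ∑ j, (fun i => -Y i) (t j))), ∏ j, P (t j))
          + (∑ t ∈ (Finset.univ.filter (fun t : Fin c → Fin n => (c : ℝ) * s ≤ ∑ j, Y (t j))
            ∩ Finset.univ.filter (fun t : Fin c → Fin n =>
              (c : ℝ) * s ≤ ∑ j, (fun i => -Y i) (t j))), ∏ j, P (t j))
          = (∑ t ∈ Finset.univ.filter (fun t : Fin c → Fin n => (c : ℝ) * s ≤ ∑ j, Y (t j)),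
              ∏ j, P (t j))
          + (∑ t ∈ Finset.univ.filter (fun t : Fin c → Fin n =>
              (c : ℝ) * s ≤ ∑ j, (fun i => -Y i) (t j)), ∏ j, P (t j)) :=
        Finset.sum_union_inter
      have h3 : 0 ≤ ∑ t ∈ (Finset.univ.filter (fun t : Fin c → Fin n => (c : ℝ) * s ≤ ∑ j, Y (t j))
          ∩ Finset.univ.filter (fun t : Fin c → Fin n =>
            (c : ℝ) * s ≤ ∑ j, (fun i => -Y i) (t j))), ∏ j, P (t j) :=
        Finset.sum_nonneg fun t _ => hwnn t
      linarith
    refine hub.trans ?_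
    -- 2 exp(-η²/8) ≤ δ
    have hx0 : (83 : ℝ) / 100 ≤ η ^ 2 / 8 - L := by
      have hu8 : u ≥ (282 : ℝ) / 100 := by
        rw [hudef]
        refine le_trans fmc_sqrt8_lb (Real.sqrt_le_sqrt (by linarith))
      have heq : η ^ 2 / 8 - L = 1 / 8 + u / 4 := by
        rw [hηu]; linear_combination (1 / 8 : ℝ) * hu2
      rw [heq]; linarith
    have h2exp : 2 ≤ Real.exp (η ^ 2 / 8 - L) := fmc_two_le_exp _ hx0
    calc Real.exp (-(η ^ 2 / 8)) + Real.exp (-(η ^ 2 / 8))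
        = 2 * Real.exp (-(η ^ 2 / 8)) := by ring
      _ ≤ Real.exp (η ^ 2 / 8 - L) * Real.exp (-(η ^ 2 / 8)) := by
          apply mul_le_mul_of_nonneg_right h2exp (Real.exp_pos _).le
      _ = Real.exp (-L) := by rw [← Real.exp_add]; ring_nf
      _ = δ := hδL.symm
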